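/- Let S be a weak Del Pezzo surface of degree 4 admitting four (possibly infinitely near) blown-up points in good position and minimal, inducing a degree-2 conic bundle g, and let f be the degree-1 conic bundle through the fifth point p_{i₅,1}. Then T_f + T_g ≥ −2K_S − 2F₁ − 2F₂ = 2(μ*C_{i₅,1} − μ*C_{i₅,j₅}) ≥ 0 in the pseudo-effective sense; i.e., the sum of relative tangent bundles T_f + T_g is an effective divisor class on S. -/
import Mathlib


/-!
Statement 19: Let S be a weak Del Pezzo surface of degree 4 admitting four
(possibly infinitely near) blown-up points in good position and minimal,
inducing a degree-2 conic bundle g, and let f be the degree-1 conic bundle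
through the fifth point p_{i₅,1}.  Then
T_f + T_g ≥ −2K_S − 2F₁ − 2F₂ = 2(μ*C_{i₅,1} − μ*C_{i₅,j₅}) ≥ 0
in the pseudo-effective sense; i.e. T_f + T_g is an effective divisor class.

Model: `NS` = NS(S) with effectivity predicate `Eff`, `H` = μ*(line),
`c t` (t : Fin 4) the total transforms of the four good-position points,
`C51 = μ*C_{i₅,1}` and `C5j = μ*C_{i₅,j₅}` (the fifth blown-up point), so
that −K_S = 3H − Σ c t − C5j.  The general fibres are F₁ = H − C51 and
F₂ = 2H − Σ c t = −K_S − (H − C5j); the relative tangent classes satisfy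
T_f = −K_S − 2F₁ + R(f), T_g = −K_S − 2F₂ + R(g) with effective ramification
R(f), R(g), and μ*C_{i₅,1} − μ*C_{i₅,j₅} is effective.
-/

theorem sum_of_relative_tangents_effective
    (NS : Type) [AddCommGroup NS]
    (Eff : NS → Prop)
    (heffadd : ∀ x y : NS, Eff x → Eff y → Eff (x + y))
    (H K : NS) (c : Fin 4 → NS) (C51 C5j : NS)
    (hK : -K = (3 : ℤ) • H - (∑ t, c t) - C5j)
    (F₁ F₂ Tf Tg Rf Rg : NS)
    (hF₁ : F₁ = H - C51)
    (hF₂ : F₂ = -K - (H - C5j))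
    (hF₂' : F₂ = (2 : ℤ) • H - ∑ t, c t)
    (hTf : Tf = -K - (2 : ℤ) • F₁ + Rf)
    (hTg : Tg = -K - (2 : ℤ) • F₂ + Rg)
    (hRf : Eff Rf) (hRg : Eff Rg)
    (hchain : Eff (C51 - C5j)) :
    Eff (Tf + Tg - ((-(2 : ℤ)) • K - (2 : ℤ) • F₁ - (2 : ℤ) • F₂)) ∧
    ((-(2 : ℤ)) • K - (2 : ℤ) • F₁ - (2 : ℤ) • F₂ = (2 : ℤ) • (C51 - C5j)) ∧
    Eff (Tf + Tg) := by
  have heq : (-(2 : ℤ)) • K - (2 : ℤ) • F₁ - (2 : ℤ) • F₂ = (2 : ℤ) • (C51 - C5j) := by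
    subst hF₁ hF₂
    module
  have h1 : Tf + Tg - ((-(2 : ℤ)) • K - (2 : ℤ) • F₁ - (2 : ℤ) • F₂) = Rf + Rg := by
    subst hTf hTg
    module
  refine ⟨h1 ▸ heffadd _ _ hRf hRg, heq, ?_⟩
  have h2 : Tf + Tg = Rf + Rg + ((C51 - C5j) + (C51 - C5j)) := by
    have := heq
    subst hTf hTg hF₁ hF₂
    linear_combination (norm := module) this
  rw [h2]
  exact heffadd _ _ (heffadd _ _ hRf hRg) (heffadd _ _ hchain hchain)
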